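/- Let N be a positive real, h_1 = 1, h_{i+1} = h_i + 2^{d_i} − 1 with d_i = 2^{A_s(h_i)} (s ≥ 1 fixed), and suppose a node v activated at the end of epoch i−1 receives at least N_u/(4·2^{d_{i-1}}) points where N_u ≥ N/h_j² for some j ≤ i−1. Then N_v ≥ N/h_i². -/

import Mathlib

/-- The Ackermann-like hierarchy: `Ack 0 N = N`, `Ack 1 N = 2^N`,
and `Ack (i+1) N` is the `(N+1)`-fold iterate of `Ack i` applied to `N`. -/
def Ack : ℕ → ℕ → ℕ
  | 0, N => N
  | 1, N => 2 ^ N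
  | (i+2), N => (Ack (i+1))^[N + 1] N

lemma iterate_ge (f : ℕ → ℕ) (hf : ∀ x, x ≤ f x) : ∀ n x, x ≤ f^[n] x := by
  intro n
  induction n with
  | zero => simp
  | succ n ih =>
    intro x
    rw [Function.iterate_succ_apply]
    exact le_trans (hf x) (ih (f x))

lemma ack_ge (s N : ℕ) : N ≤ Ack s N := by
  induction s generalizing N with
  | zero => simp [Ack]
  | succ s ih =>
    cases s with
    | zero =>
      show N ≤ Ack 1 N
      rw [Ack]
      exact (Nat.lt_two_pow_self (n := N)).le
    | succ t =>
      show N ≤ Ack (t + 2) N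
      rw [Ack]
      exact iterate_ge _ ih _ N

lemma four_sq_le (m : ℕ) (hm : 1 ≤ m) : 4 * m ^ 2 ≤ 2 ^ (2 ^ m) := by
  induction m, hm using Nat.le_induction with
  | base => norm_num
  | succ m hm ih =>
    have h1 : 2 ^ 2 ^ (m + 1) = (2 ^ 2 ^ m) ^ 2 := by
      rw [← pow_mul, pow_succ]
    rw [h1]
    nlinarith [sq_nonneg (m - 1 : ℤ), hm, ih]

theorem numpoints (s : ℕ) (hs : 1 ≤ s) (h : ℕ → ℕ)
    (h1 : h 1 = 1)
    (hrec : ∀ i, 1 ≤ i → h (i + 1) = h i + 2 ^ (2 ^ Ack s (h i)) - 1)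
    (N Nu Nv : ℝ) (hN : 0 < N) (i j : ℕ) (hi : 2 ≤ i) (hj : 1 ≤ j)
    (hji : j ≤ i - 1)
    (hNu : N / (h j : ℝ) ^ 2 ≤ Nu)
    (hNv : Nu / (4 * (2 : ℝ) ^ (2 ^ Ack s (h (i - 1)))) ≤ Nv) :
    N / (h i : ℝ) ^ 2 ≤ Nv := by
  -- basic facts about h
  have hpos : ∀ k, 1 ≤ k → 1 ≤ h k := by
    intro k hk
    induction k, hk using Nat.le_induction with
    | base => omega
    | succ k hk ih =>
      rw [hrec k hk]
      have : 1 ≤ 2 ^ (2 ^ Ack s (h k)) := Nat.one_le_two_pow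
      omega
  have hmono : ∀ a b, 1 ≤ a → a ≤ b → h a ≤ h b := by
    intro a b ha hab
    induction b, hab using Nat.le_induction with
    | base => exact le_rfl
    | succ b hab ih =>
      have hb1 : 1 ≤ b := le_trans ha hab
      rw [hrec b hb1]
      have : 1 ≤ 2 ^ (2 ^ Ack s (h b)) := Nat.one_le_two_pow
      omega
  -- the key natural number inequality
  set m := h (i - 1) with hm
  set d := 2 ^ Ack s m with hd
  have hm1 : 1 ≤ m := hpos _ (by omega)
  have hjm : h j ≤ m := hmono j (i - 1) hj hji
  have hi_eq : h i = m + 2 ^ d - 1 := by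
    have : i = (i - 1) + 1 := by omega
    rw [this, hrec (i - 1) (by omega)]
  have hd_ge : 2 ^ m ≤ d := by
    rw [hd]
    exact Nat.pow_le_pow_right (by norm_num) (ack_ge s m)
  have h2d : 4 * m ^ 2 ≤ 2 ^ d :=
    le_trans (four_sq_le m hm1) (Nat.pow_le_pow_right (by norm_num) hd_ge)
  have hi_ge : 2 ^ d ≤ h i := by
    rw [hi_eq]
    have : 1 ≤ 2 ^ d := Nat.one_le_two_pow
    omega
  have key : 4 * (h j) ^ 2 * 2 ^ d ≤ (h i) ^ 2 := by
    calc 4 * (h j) ^ 2 * 2 ^ d ≤ 4 * m ^ 2 * 2 ^ d := by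
          have : (h j) ^ 2 ≤ m ^ 2 := Nat.pow_le_pow_left hjm 2
          exact Nat.mul_le_mul_right _ (Nat.mul_le_mul_left _ this)
      _ ≤ 2 ^ d * 2 ^ d := Nat.mul_le_mul_right _ h2d
      _ ≤ h i * h i := Nat.mul_le_mul hi_ge hi_ge
      _ = (h i) ^ 2 := (sq (h i)).symm
  -- move to the reals
  have hjpos : (0 : ℝ) < (h j : ℝ) ^ 2 := by
    have := hpos j hj
    positivity
  have hdpos : (0 : ℝ) < 4 * (2 : ℝ) ^ d := by positivity
  have hipos : (0 : ℝ) < (h i : ℝ) ^ 2 := by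
    have := hpos i (by omega)
    positivity
  have keyR : 4 * ((h j : ℝ)) ^ 2 * 2 ^ d ≤ ((h i : ℝ)) ^ 2 := by
    have := key
    exact_mod_cast this
  have step1 : N / (h i : ℝ) ^ 2 ≤ N / (4 * (h j : ℝ) ^ 2 * 2 ^ d) :=
    div_le_div_of_nonneg_left hN.le (by positivity) keyR
  have step2 : N / (4 * (h j : ℝ) ^ 2 * 2 ^ d)
      = (N / (h j : ℝ) ^ 2) / (4 * (2 : ℝ) ^ d) := by
    rw [div_div]
    congr 1
    ring
  have step3 : (N / (h j : ℝ) ^ 2) / (4 * (2 : ℝ) ^ d)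
      ≤ Nu / (4 * (2 : ℝ) ^ d) := by gcongr
  calc N / (h i : ℝ) ^ 2 ≤ N / (4 * (h j : ℝ) ^ 2 * 2 ^ d) := step1
    _ = (N / (h j : ℝ) ^ 2) / (4 * (2 : ℝ) ^ d) := step2
    _ ≤ Nu / (4 * (2 : ℝ) ^ d) := step3
    _ ≤ Nv := hNv
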